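/- For every rotation k ∈ SO(2), the lattice k·[[1, 1/2],[0, √3/2]]·ℤ² is admissible for the open unit disc D and has covolume √3/2; hence every rotation of the hexagonal lattice is D-critical. -/

import Mathlib

set_option maxHeartbeats 1000000

open MeasureTheory

noncomputable section

/-- The lattice `g ℤ²` in `ℝ²`. -/
def lattice2 (g : Matrix (Fin 2) (Fin 2) ℝ) : Set (Fin 2 → ℝ) :=
  {x | ∃ m : Fin 2 → ℤ, x = g.mulVec (fun i => (m i : ℝ))}

/-- `K`-admissibility: the lattice meets `K` only at the origin. -/
def Admissible2 (K : Set (Fin 2 → ℝ)) (g : Matrix (Fin 2) (Fin 2) ℝ) : Prop :=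
  lattice2 g ∩ K = {0}

/-- The critical determinant `Δ(K)`. -/
def critDet2 (K : Set (Fin 2 → ℝ)) : ℝ :=
  sInf {d | ∃ g : Matrix (Fin 2) (Fin 2) ℝ, g.det ≠ 0 ∧ Admissible2 K g ∧ d = |g.det|}

/-- The critical locus `𝓛(K)`: the set of `K`-admissible lattices of covolume `Δ(K)`. -/
def critLocus2 (K : Set (Fin 2 → ℝ)) : Set (Set (Fin 2 → ℝ)) :=
  {L | ∃ g : Matrix (Fin 2) (Fin 2) ℝ, g.det ≠ 0 ∧ L = lattice2 g ∧ Admissible2 K g ∧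
    |g.det| = critDet2 K}

/-- The open unit disc in `ℝ²`. -/
def unitDisc : Set (Fin 2 → ℝ) := {x | x 0 ^ 2 + x 1 ^ 2 < 1}

/-- The open unit square `(-1,1)²`. -/
def openSquare : Set (Fin 2 → ℝ) := {x | |x 0| < 1 ∧ |x 1| < 1}

/-- A matrix generating the hexagonal lattice `ℤ·(1,0) + ℤ·(1/2,√3/2)`. -/
def hexMat : Matrix (Fin 2) (Fin 2) ℝ := !![1, 1/2; 0, Real.sqrt 3 / 2]

/-! ### Auxiliary lemmas -/

theorem aux_intform (p q : ℤ) (h : ¬(p = 0 ∧ q = 0)) : 1 ≤ p^2 + p*q + q^2 := by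
  have hne : p^2 + p*q + q^2 ≠ 0 := by
    intro h0
    have hq : q = 0 := by nlinarith [sq_nonneg (2*p+q), sq_nonneg q]
    have hp : p = 0 := by nlinarith
    exact h ⟨hp, hq⟩
  have h4 : 0 ≤ p^2 + p*q + q^2 := by nlinarith [sq_nonneg (2*p+q), sq_nonneg q]
  omega

theorem aux_abs_le_sq_int (n : ℤ) : |n| ≤ n^2 := by
  rcases eq_or_ne n 0 with h | h
  · simp [h]
  · have h1 : 1 ≤ |n| := Int.one_le_abs h
    have h2 : |n| * 1 ≤ |n| * |n| := by nlinarith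
    calc |n| = |n| * 1 := by ring
    _ ≤ |n| * |n| := h2
    _ = n^2 := by rw [← abs_mul, abs_mul_self, sq]

theorem aux_mulVec2 (g : Matrix (Fin 2) (Fin 2) ℝ) (x : Fin 2 → ℝ) (i : Fin 2) :
    g.mulVec x i = g i 0 * x 0 + g i 1 * x 1 := by
  simp [Matrix.mulVec, dotProduct, Fin.sum_univ_two]

theorem aux_pt_mem_lattice (g : Matrix (Fin 2) (Fin 2) ℝ) (p q : ℤ) :
    (fun i => g i 0 * p + g i 1 * q) ∈ lattice2 g := by
  refine ⟨![p, q], ?_⟩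
  funext i
  rw [aux_mulVec2]
  simp

theorem aux_adm_ge (g : Matrix (Fin 2) (Fin 2) ℝ) (hadm : Admissible2 unitDisc g)
    (hg : g.det ≠ 0) (p q : ℤ) (h : ¬(p = 0 ∧ q = 0)) :
    1 ≤ (g 0 0 * p + g 0 1 * q)^2 + (g 1 0 * p + g 1 1 * q)^2 := by
  by_contra hc
  push_neg at hc
  set x : Fin 2 → ℝ := fun i => g i 0 * p + g i 1 * q with hx
  have hmem : x ∈ lattice2 g ∩ unitDisc := ⟨aux_pt_mem_lattice g p q, hc⟩
  rw [hadm] at hmem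
  have hx0 : x = 0 := hmem
  have hmul : g.mulVec ![(p:ℝ), (q:ℝ)] = 0 := by
    funext i
    rw [aux_mulVec2]
    have := congrFun hx0 i
    simpa [hx] using this
  have hu : IsUnit g.det := isUnit_iff_ne_zero.2 hg
  have hkill : g⁻¹.mulVec (g.mulVec ![(p:ℝ), (q:ℝ)]) = g⁻¹.mulVec 0 := by rw [hmul]
  rw [Matrix.mulVec_mulVec, Matrix.nonsing_inv_mul g hu, Matrix.one_mulVec,
    Matrix.mulVec_zero] at hkill
  have hp : (p:ℝ) = 0 := by simpa using congrFun hkill 0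
  have hq : (q:ℝ) = 0 := by simpa using congrFun hkill 1
  exact h ⟨by exact_mod_cast hp, by exact_mod_cast hq⟩

/-- The quadratic form of the lattice `g ℤ²`. -/
def Qf (g : Matrix (Fin 2) (Fin 2) ℝ) (z : ℤ × ℤ) : ℝ :=
  (g 0 0 * z.1 + g 0 1 * z.2)^2 + (g 1 0 * z.1 + g 1 1 * z.2)^2

theorem aux_exists_shortest (g : Matrix (Fin 2) (Fin 2) ℝ) (hg : g.det ≠ 0) :
    ∃ z : ℤ × ℤ, z ≠ 0 ∧ ∀ w : ℤ × ℤ, w ≠ 0 → Qf g z ≤ Qf g w := by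
  have hu : IsUnit g.det := isUnit_iff_ne_zero.2 hg
  have hinv := Matrix.nonsing_inv_mul g hu
  have e00 := congrFun (congrFun hinv 0) 0
  have e01 := congrFun (congrFun hinv 0) 1
  have e10 := congrFun (congrFun hinv 1) 0
  have e11 := congrFun (congrFun hinv 1) 1
  simp [Matrix.mul_apply, Fin.sum_univ_two, Matrix.one_apply] at e00 e01 e10 e11
  set h := g⁻¹ with hh
  set R : ℝ := Qf g (1, 0) with hR
  have hRnonneg : 0 ≤ R := by simp [hR, Qf]; positivity
  set C : ℝ := (h 0 0^2 + h 0 1^2 + h 1 0^2 + h 1 1^2 + 1) * (R + 1) with hC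
  set b : ℤ := ⌈C⌉ with hb
  set S : Set (ℤ × ℤ) := {z | z ≠ 0 ∧ Qf g z ≤ R} with hS
  have hbound : ∀ z ∈ S, z ∈ Set.Icc (-b, -b) (b, b) := by
    rintro ⟨p, q⟩ ⟨-, hzQ⟩
    set X : ℝ := g 0 0 * p + g 0 1 * q with hX
    set Y : ℝ := g 1 0 * p + g 1 1 * q with hY
    have hXY : X^2 + Y^2 ≤ R := hzQ
    have hp : (p:ℝ) = h 0 0 * X + h 0 1 * Y := by
      rw [hX, hY]; linear_combination (-(p:ℝ)) * e00 + (-(q:ℝ)) * e01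
    have hq : (q:ℝ) = h 1 0 * X + h 1 1 * Y := by
      rw [hX, hY]; linear_combination (-(p:ℝ)) * e10 + (-(q:ℝ)) * e11
    have hp2 : ((p^2 : ℤ) : ℝ) ≤ C := by
      push_cast
      rw [hp, hC]
      nlinarith [sq_nonneg (h 0 0 * Y - h 0 1 * X), sq_nonneg X, sq_nonneg Y,
        sq_nonneg (h 1 0), sq_nonneg (h 1 1), sq_nonneg (h 0 0), sq_nonneg (h 0 1)]
    have hq2 : ((q^2 : ℤ) : ℝ) ≤ C := by
      push_cast
      rw [hq, hC]
      nlinarith [sq_nonneg (h 1 0 * Y - h 1 1 * X), sq_nonneg X, sq_nonneg Y,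
        sq_nonneg (h 0 0), sq_nonneg (h 0 1), sq_nonneg (h 1 0), sq_nonneg (h 1 1)]
    have hpb : p^2 ≤ b := by exact_mod_cast hp2.trans (Int.le_ceil C)
    have hqb : q^2 ≤ b := by exact_mod_cast hq2.trans (Int.le_ceil C)
    have h1 := (aux_abs_le_sq_int p).trans hpb
    have h2 := (aux_abs_le_sq_int q).trans hqb
    rw [abs_le] at h1 h2
    exact ⟨⟨h1.1, h2.1⟩, ⟨h1.2, h2.2⟩⟩
  have hSfin : S.Finite := Set.Finite.subset (Set.finite_Icc _ _) hbound
  have hmem : (1, 0) ∈ S := ⟨by simp, le_refl R⟩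
  obtain ⟨z, hzS, hzmin⟩ := hSfin.toFinset.exists_min_image (Qf g)
    ⟨(1,0), hSfin.mem_toFinset.2 hmem⟩
  rw [hSfin.mem_toFinset] at hzS
  refine ⟨z, hzS.1, fun w hw => ?_⟩
  by_cases hwR : Qf g w ≤ R
  · exact hzmin w (hSfin.mem_toFinset.2 ⟨hw, hwR⟩)
  · exact le_trans (hzmin (1,0) (hSfin.mem_toFinset.2 hmem)) (le_of_not_ge hwR)

theorem aux_final_ineq (A B C : ℝ) (hA1 : 1 ≤ A) (hAB : A ≤ B) (hC : C^2 ≤ (A/2)^2) :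
    3/4 ≤ A * B - C^2 := by nlinarith

theorem aux_sqrt_step (x : ℝ) (h : 3/4 ≤ x^2) : Real.sqrt 3 / 2 ≤ |x| := by
  have hs3 : Real.sqrt 3 ^ 2 = 3 := Real.sq_sqrt (by norm_num)
  nlinarith [abs_nonneg x, Real.sqrt_nonneg 3, sq_abs x]

/-- Hermite's bound: any disc-admissible lattice has covolume at least `√3/2`. -/
theorem aux_disc_lower (g : Matrix (Fin 2) (Fin 2) ℝ) (hg : g.det ≠ 0)
    (hadm : Admissible2 unitDisc g) : Real.sqrt 3 / 2 ≤ |g.det| := by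
  have hQ1 : ∀ z : ℤ × ℤ, z ≠ 0 → 1 ≤ Qf g z := by
    rintro ⟨p, q⟩ hz
    refine aux_adm_ge g hadm hg p q ?_
    rintro ⟨h1, h2⟩
    exact hz (by simp [Prod.ext_iff, h1, h2])
  obtain ⟨⟨p, q⟩, hz0, hzmin⟩ := aux_exists_shortest g hg
  have hQdef : ∀ z : ℤ × ℤ, Qf g z =
      (g 0 0 * z.1 + g 0 1 * z.2)^2 + (g 1 0 * z.1 + g 1 1 * z.2)^2 := fun _ => rfl
  set d : ℕ := Int.gcd p q with hd
  have hdne : d ≠ 0 := by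
    rw [hd, Ne, Int.gcd_eq_zero_iff]
    intro ⟨h1, h2⟩; exact hz0 (by simp [h1, h2, Prod.ext_iff])
  have hdp : (d : ℤ) ∣ p := Int.gcd_dvd_left p q
  have hdq : (d : ℤ) ∣ q := Int.gcd_dvd_right p q
  have hp' : (d : ℤ) * (p / d) = p := Int.mul_ediv_cancel' hdp
  have hq' : (d : ℤ) * (q / d) = q := Int.mul_ediv_cancel' hdq
  have hz'0 : ((p / (d:ℤ), q / (d:ℤ)) : ℤ × ℤ) ≠ 0 := by
    rw [Ne, Prod.mk_eq_zero]
    rintro ⟨h1, h2⟩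
    apply hz0
    rw [Prod.mk_eq_zero]
    exact ⟨by rw [← hp', h1, mul_zero], by rw [← hq', h2, mul_zero]⟩
  have hQscale : Qf g (p, q) = (d:ℝ)^2 * Qf g (p / d, q / d) := by
    rw [hQdef, hQdef]
    have c1 : (p : ℝ) = (d : ℝ) * ((p / d : ℤ) : ℝ) := by exact_mod_cast hp'.symm
    have c2 : (q : ℝ) = (d : ℝ) * ((q / d : ℤ) : ℝ) := by exact_mod_cast hq'.symm
    simp only
    rw [c1, c2]; ring
  have hd1 : d = 1 := by
    have h1 : 1 ≤ Qf g (p / d, q / d) := hQ1 _ hz'0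
    have h2 : Qf g (p, q) ≤ Qf g (p / d, q / d) := hzmin _ hz'0
    have hd1' : (1:ℝ) ≤ d := by exact_mod_cast Nat.one_le_iff_ne_zero.2 hdne
    have hsq : ((d:ℝ))^2 ≤ 1 := by nlinarith
    have hle : (d:ℝ) ≤ 1 := by nlinarith
    have : d ≤ 1 := by exact_mod_cast hle
    omega
  have hbez := Int.gcd_eq_gcd_ab p q
  rw [← hd, hd1] at hbez
  set a : ℤ := Int.gcdA p q with ha
  set bb : ℤ := Int.gcdB p q with hbb
  set r : ℤ := -bb with hr
  set s : ℤ := a with hs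
  have hdet1 : p * s - r * q = 1 := by rw [hr, hs]; push_cast at hbez; linarith [hbez]
  set U0 : ℝ := g 0 0 * p + g 0 1 * q with hU0
  set U1 : ℝ := g 1 0 * p + g 1 1 * q with hU1
  set W0 : ℝ := g 0 0 * r + g 0 1 * s with hW0
  set W1 : ℝ := g 1 0 * r + g 1 1 * s with hW1
  set A : ℝ := Qf g (p, q) with hA
  have hA1 : 1 ≤ A := hQ1 _ hz0
  have hApos : 0 < A := by linarith
  have hAval : A = U0^2 + U1^2 := by rw [hA, hQdef]
  set T : ℝ := U0 * W0 + U1 * W1 with hT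
  set n : ℤ := round (T / A) with hn
  set r' : ℤ := r - n * p with hr'
  set s' : ℤ := s - n * q with hs'
  have hz''0 : ((r', s') : ℤ × ℤ) ≠ 0 := by
    rw [Ne, Prod.mk_eq_zero]
    rintro ⟨h1, h2⟩
    rw [hr'] at h1; rw [hs'] at h2
    have e1 : r = n * p := by linarith
    have e2 : s = n * q := by linarith
    have : (1:ℤ) = 0 := by rw [← hdet1, e1, e2]; ring
    exact one_ne_zero this
  set V0 : ℝ := W0 - n * U0 with hV0
  set V1 : ℝ := W1 - n * U1 with hV1
  set B : ℝ := Qf g (r', s') with hB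
  have hB1 : 1 ≤ B := hQ1 _ hz''0
  have hAB : A ≤ B := hzmin _ hz''0
  have hBval : B = V0^2 + V1^2 := by
    rw [hB, hQdef, hV0, hV1, hW0, hW1, hU0, hU1]
    simp only [hr', hs']
    push_cast
    ring
  set C : ℝ := U0 * V0 + U1 * V1 with hC
  have hCval : C = T - n * A := by rw [hC, hV0, hV1, hT, hAval]; ring
  have hCbound : |C| ≤ A / 2 := by
    have hround : |T / A - n| ≤ 1/2 := by simpa using abs_sub_round (T / A)
    have heq : C = (T / A - n) * A := by rw [hCval]; field_simp
    rw [heq, abs_mul, abs_of_pos hApos]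
    nlinarith [abs_nonneg (T / A - n)]
  have hps : ((p:ℝ) * s - r * q) = 1 := by exact_mod_cast congrArg (Int.cast : ℤ → ℝ) hdet1
  have hdetid : g.det = U0 * V1 - U1 * V0 := by
    rw [Matrix.det_fin_two, hV0, hV1, hW0, hW1, hU0, hU1]
    linear_combination (g 0 1 * g 1 0 - g 0 0 * g 1 1) * hps
  have hC2 : C^2 ≤ (A/2)^2 := by
    rw [← sq_abs C]
    nlinarith [abs_nonneg C, hCbound, hApos]
  have hfin : 3/4 ≤ g.det ^ 2 := by
    have lag : g.det ^ 2 = A * B - C^2 := by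
      rw [hdetid, hAval, hBval, hC]; ring
    rw [lag]
    exact aux_final_ineq A B C hA1 hAB hC2
  exact aux_sqrt_step _ hfin

theorem aux_orth_norm (k : Matrix (Fin 2) (Fin 2) ℝ) (hk : k.transpose * k = 1)
    (y : Fin 2 → ℝ) : (k.mulVec y 0)^2 + (k.mulVec y 1)^2 = y 0 ^ 2 + y 1 ^ 2 := by
  have e1 := congrFun (congrFun hk 0) 0
  have e2 := congrFun (congrFun hk 0) 1
  have e3 := congrFun (congrFun hk 1) 1
  simp [Matrix.mul_apply, Fin.sum_univ_two, Matrix.one_apply, Matrix.transpose_apply]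
    at e1 e2 e3
  rw [aux_mulVec2, aux_mulVec2]
  linear_combination (y 0)^2 * e1 + 2 * (y 0) * (y 1) * e2 + (y 1)^2 * e3

theorem aux_hex_det : hexMat.det = Real.sqrt 3 / 2 := by
  rw [hexMat, Matrix.det_fin_two_of]
  ring

/-- Every rotation of the hexagonal lattice is admissible for the unit disc, has covolume
`√3/2`, and is hence `D`-critical. -/
theorem rotated_hexagonal_lattice_critical (k : Matrix (Fin 2) (Fin 2) ℝ)
    (hk : k.transpose * k = 1) (hdet : k.det = 1) :
    Admissible2 unitDisc (k * hexMat) ∧ |(k * hexMat).det| = Real.sqrt 3 / 2 ∧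
      lattice2 (k * hexMat) ∈ critLocus2 unitDisc := by
  have hs3 : Real.sqrt 3 ^ 2 = 3 := Real.sq_sqrt (by norm_num)
  have hdetval : (k * hexMat).det = Real.sqrt 3 / 2 := by
    rw [Matrix.det_mul, hdet, aux_hex_det, one_mul]
  have hdetabs : |(k * hexMat).det| = Real.sqrt 3 / 2 := by
    rw [hdetval]
    exact abs_of_nonneg (by positivity)
  have hdetne : (k * hexMat).det ≠ 0 := by
    rw [hdetval]
    positivity
  -- admissibility
  have hadm : Admissible2 unitDisc (k * hexMat) := by
    rw [Admissible2]
    ext x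
    constructor
    · rintro ⟨⟨m, rfl⟩, hxD⟩
      by_cases hm : m 0 = 0 ∧ m 1 = 0
      · have hm0 : (fun i => ((m i : ℝ))) = 0 := by
          funext i
          fin_cases i <;> simp [hm.1, hm.2]
        simp [hm0, Matrix.mulVec_zero]
      · exfalso
        set y : Fin 2 → ℝ := hexMat.mulVec (fun i => (m i : ℝ)) with hy
        have hxy : (k * hexMat).mulVec (fun i => (m i : ℝ)) = k.mulVec y := by
          rw [hy, ← Matrix.mulVec_mulVec]
        have hynorm : y 0 ^ 2 + y 1 ^ 2 =
            ((m 0 ^ 2 + m 0 * m 1 + m 1 ^ 2 : ℤ) : ℝ) := by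
          have hy0 : y 0 = (m 0 : ℝ) + (1/2) * (m 1 : ℝ) := by
            rw [hy, aux_mulVec2]
            simp [hexMat]
          have hy1 : y 1 = (Real.sqrt 3 / 2) * (m 1 : ℝ) := by
            rw [hy, aux_mulVec2]
            simp [hexMat]
          rw [hy0, hy1]
          push_cast
          linear_combination ((m 1 : ℝ)^2 / 4) * hs3
        have hint : 1 ≤ ((m 0 ^ 2 + m 0 * m 1 + m 1 ^ 2 : ℤ) : ℝ) := by
          exact_mod_cast aux_intform (m 0) (m 1) hm
        have hx2 : (k.mulVec y 0)^2 + (k.mulVec y 1)^2 < 1 := by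
          rw [← hxy]
          exact hxD
        rw [aux_orth_norm k hk, hynorm] at hx2
        linarith
    · rintro rfl
      refine ⟨⟨fun _ => 0, ?_⟩, ?_⟩
      · funext i
        rw [aux_mulVec2]
        simp
      · show (0:ℝ) ^ 2 + (0:ℝ) ^ 2 < 1
        norm_num
  -- critical determinant
  have hcrit : critDet2 unitDisc = Real.sqrt 3 / 2 := by
    rw [critDet2]
    have hmem : Real.sqrt 3 / 2 ∈
        {d | ∃ g : Matrix (Fin 2) (Fin 2) ℝ, g.det ≠ 0 ∧ Admissible2 unitDisc g ∧
          d = |g.det|} :=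
      ⟨k * hexMat, hdetne, hadm, hdetabs.symm⟩
    have hlb : ∀ d ∈ {d | ∃ g : Matrix (Fin 2) (Fin 2) ℝ, g.det ≠ 0 ∧
        Admissible2 unitDisc g ∧ d = |g.det|}, Real.sqrt 3 / 2 ≤ d := by
      rintro d ⟨g, hg, hadm', rfl⟩
      exact aux_disc_lower g hg hadm'
    exact le_antisymm (csInf_le ⟨Real.sqrt 3 / 2, hlb⟩ hmem) (le_csInf ⟨_, hmem⟩ hlb)
  exact ⟨hadm, hdetabs, ⟨k * hexMat, hdetne, rfl, hadm, by rw [hdetabs, hcrit]⟩⟩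

end
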